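/- The function Ψ(p) = √(1 + p⁻² · ln((2p−1)/(2(p−1)))) − 1 is strictly decreasing on the interval (1, ∞). -/

import Mathlib

noncomputable def Psi (p : ℝ) : ℝ :=
  Real.sqrt (1 + (p ^ 2)⁻¹ * Real.log ((2 * p - 1) / (2 * (p - 1)))) - 1

theorem psi_strictAntiOn : StrictAntiOn Psi (Set.Ioi 1) := by
  intro a ha b hb hab
  simp only [Set.mem_Ioi] at ha hb
  unfold Psi
  have hrb : 1 < (2 * b - 1) / (2 * (b - 1)) := by
    rw [lt_div_iff₀ (by linarith)]; linarith
  have hlog : Real.log ((2 * b - 1) / (2 * (b - 1))) < Real.log ((2 * a - 1) / (2 * (a - 1))) := by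
    apply Real.log_lt_log (by positivity)
    rw [div_lt_div_iff₀ (by linarith) (by linarith)]
    nlinarith
  have hlb : 0 < Real.log ((2 * b - 1) / (2 * (b - 1))) := Real.log_pos hrb
  have hinv : (b ^ 2)⁻¹ < (a ^ 2)⁻¹ := by
    rw [inv_lt_inv₀ (by positivity) (by positivity)]
    nlinarith
  have hmul : (b ^ 2)⁻¹ * Real.log ((2 * b - 1) / (2 * (b - 1))) <
      (a ^ 2)⁻¹ * Real.log ((2 * a - 1) / (2 * (a - 1))) :=
    mul_lt_mul'' hinv hlog (by positivity) hlb.le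
  have hnn : 0 ≤ (b ^ 2)⁻¹ * Real.log ((2 * b - 1) / (2 * (b - 1))) :=
    mul_nonneg (by positivity) hlb.le
  have hsq := Real.sqrt_lt_sqrt (by linarith) (add_lt_add_right hmul 1)
  linarith
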